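/- The set of angles α ∈ 𝕋 that are weakly pre-periodic (for some period k ≥ 1) has Lebesgue (Haar) measure zero in 𝕋. -/

import Mathlib

open Set MeasureTheory Filter
open scoped Classical

noncomputable section

/-- The circle `ℝ/ℤ`. -/
abbrev 𝕋 := AddCircle (1 : ℝ)

/-- The doubling map `h(x) = 2x` on the circle. -/
def dbl (x : 𝕋) : 𝕋 := x + x

/-- The representative of a point of the circle lying in `[0,1)`. -/
def rep (x : 𝕋) : ℝ := (AddCircle.equivIco 1 0 x : ℝ)

/-- `⋆₁ = α/2`. -/
def star1 (α : 𝕋) : 𝕋 := ((rep α / 2 : ℝ) : 𝕋)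

/-- `⋆₂ = α/2 + 1/2`. -/
def star2 (α : 𝕋) : 𝕋 := ((rep α / 2 + 1 / 2 : ℝ) : 𝕋)

/-- The closed semicircle `C(L) = {α/2 + t : t ∈ [0,1/2]}`. -/
def arcL (α : 𝕋) : Set 𝕋 := (fun t : ℝ => ((rep α / 2 + t : ℝ) : 𝕋)) '' Set.Icc 0 (1 / 2)

/-- The closed semicircle `C(R) = {α/2 + 1/2 + t : t ∈ [0,1/2]}`. -/
def arcR (α : 𝕋) : Set 𝕋 :=
  (fun t : ℝ => ((rep α / 2 + 1 / 2 + t : ℝ) : 𝕋)) '' Set.Icc 0 (1 / 2)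

/-- The open semicircle `{α/2 + t : t ∈ (0,1/2)}`. -/
def openArcL (α : 𝕋) : Set 𝕋 := (fun t : ℝ => ((rep α / 2 + t : ℝ) : 𝕋)) '' Set.Ioo 0 (1 / 2)

/-- The open semicircle `{α/2 + 1/2 + t : t ∈ (0,1/2)}`. -/
def openArcR (α : 𝕋) : Set 𝕋 :=
  (fun t : ℝ => ((rep α / 2 + 1 / 2 + t : ℝ) : 𝕋)) '' Set.Ioo 0 (1 / 2)

/-- The alphabet `{L, R, ⋆}`. -/
inductive Letter | L | R | star
deriving DecidableEq

/-- `itin α x n` is the `(n+1)`-st letter of the itinerary `I^α(x)`. -/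
def itin (α x : 𝕋) (n : ℕ) : Letter :=
  if dbl^[n] x = star1 α ∨ dbl^[n] x = star2 α then Letter.star
  else if dbl^[n] x ∈ openArcL α then Letter.L else Letter.R

/-- The lamination `x ≈_α y`. -/
def approx (α : 𝕋) (x y : 𝕋) : Prop :=
  ∀ n : ℕ, itin α x n = itin α y n ∨ itin α x n = Letter.star ∨ itin α y n = Letter.star

/-- A point is periodic under the doubling map. -/
def IsPeriodicPt' (x : 𝕋) : Prop := ∃ k : ℕ, 1 ≤ k ∧ dbl^[k] x = x

/-- `α` is periodic under the doubling map. -/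
def Periodic' (α : 𝕋) : Prop := IsPeriodicPt' α

/-- `α` is pre-periodic under the doubling map. -/
def PrePeriodic (α : 𝕋) : Prop := ∃ m : ℕ, IsPeriodicPt' (dbl^[m] α)

/-- `D` is a gluing link with `n` arcs with respect to `≈_α`: a disjoint union of `n` closed
arcs whose `2n` endpoints occur in counterclockwise cyclic order and are consecutively glued
by `≈_α`. -/
def IsGluingLink (α : 𝕋) (n : ℕ) (D : Set 𝕋) : Prop :=
  0 < n ∧ ∃ s e : ℕ → ℝ,
    (∀ i < n, s i ≤ e i) ∧
    (∀ i j : ℕ, i < j → j < n → e i < s j) ∧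
    (∀ i < n, ∀ j < n, e j < s i + 1) ∧
    D = ⋃ i ∈ Finset.range n, (fun t : ℝ => (t : 𝕋)) '' Set.Icc (s i) (e i) ∧
    (∀ i < n, approx α ((e i : ℝ) : 𝕋) ((s ((i + 1) % n) : ℝ) : 𝕋))

/-- `L̃(x)`: the `h`-preimage of `x` in the interior of `C(L)` (for `x ≠ α`). -/
def tldL (α x : 𝕋) : 𝕋 :=
  if ((rep x / 2 : ℝ) : 𝕋) ∈ openArcL α then ((rep x / 2 : ℝ) : 𝕋)
  else ((rep x / 2 + 1 / 2 : ℝ) : 𝕋)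

/-- `R̃(x)`: the `h`-preimage of `x` in the interior of `C(R)` (for `x ≠ α`). -/
def tldR (α x : 𝕋) : 𝕋 :=
  if ((rep x / 2 : ℝ) : 𝕋) ∈ openArcR α then ((rep x / 2 : ℝ) : 𝕋)
  else ((rep x / 2 + 1 / 2 : ℝ) : 𝕋)

/-- The inverse branch associated with a single letter of `{L,R}`
(`true` codes `L`, `false` codes `R`). -/
def tldB (α : 𝕋) (b : Bool) (x : 𝕋) : 𝕋 := if b then tldL α x else tldR α x

/-- `g̃ = g̃[1] ∘ ⋯ ∘ g̃[n]` for a word `g ∈ {L,R}^*`. -/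
def wtld (α : 𝕋) (g : List Bool) (x : 𝕋) : 𝕋 := g.foldr (fun b y => tldB α b y) x

/-- The embedding `e(θ) = exp(2πiθ)` of the circle into `ℂ`. -/
def emb (x : 𝕋) : ℂ := Complex.exp (2 * Real.pi * Complex.I * (rep x))

/-- The chord of a pair of points of the circle: the closed Euclidean segment joining their
images in `ℂ`. -/
def chord (a b : 𝕋) : Set ℂ := segment ℝ (emb a) (emb b)

/-- The union of all chords `l_g` for words `g ∈ {L,R}^n`. -/
def chordsUnion (α : 𝕋) (n : ℕ) : Set ℂ :=
  ⋃ g ∈ {g : List Bool | g.length = n},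
    chord (wtld α g (star1 α)) (wtld α g (star2 α))

/-- The closed unit disk minus the chords of level `n`. -/
def diskMinus (α : 𝕋) (n : ℕ) : Set ℂ := Metric.closedBall (0 : ℂ) 1 \ chordsUnion α n

/-- `C` is a generalized cylinder set of degree `n`: the trace on the circle of the closure of
a connected component of the closed unit disk minus the chords of level `n`. -/
def IsGCS (α : 𝕋) (n : ℕ) (C : Set 𝕋) : Prop :=
  ∃ z ∈ diskMinus α n,
    C = {x : 𝕋 | emb x ∈ closure (connectedComponentIn (diskMinus α n) z)}

/-- The closed region of the circle associated with a letter (`⋆` imposes no restriction). -/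
def semi (α : 𝕋) : Letter → Set 𝕋
  | Letter.L => arcL α
  | Letter.R => arcR α
  | Letter.star => Set.univ

/-- `C(u)` for a word `u ∈ {L,R,⋆}^m`. -/
def cylSet (α : 𝕋) (u : List Letter) : Set 𝕋 :=
  {x : 𝕋 | ∀ i < u.length, dbl^[i] x ∈ semi α (u.getD i Letter.star)}

/-- The digit sequence of `I(α) = I^α(α)` (0-indexed: `ia α n` is the `(n+1)`-st digit). -/
def ia (α : 𝕋) (n : ℕ) : Letter := itin α α n

/-- A set `ℛ ⊆ ℕ` of indices is `D`-rare. -/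
def DRare (D : ℕ) (R : Finset ℕ) : Prop :=
  ∀ i : ℕ, (R.filter (fun j => i ≤ j ∧ j ≤ i + D)).card ≤ 3

/-- The `i`-th digit (1-based) of `I(α)[1..n]` is `(D,ℛ)`-duplicating. -/
def DupDigit (α : 𝕋) (D : ℕ) (R : Finset ℕ) (n i : ℕ) : Prop :=
  ∃ a b : ℕ, 1 ≤ a ∧ a ≤ i ∧ i ≤ b ∧ b ≤ n ∧
    (∀ j, a ≤ j → j ≤ b → j ∉ R → ia α (j - 1) = ia α (j - a)) ∧
    (b = n ∨ D < b - a + 1)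


/-- `α` is strongly recurrent. -/
def StronglyRecurrent (α : 𝕋) : Prop :=
  ∀ D : ℕ, 0 < D → ∀ τ : ℝ, τ < 1 →
    ∃ n : ℕ, D < n ∧ ∃ R : Finset ℕ, R ⊆ Finset.Icc 1 n ∧ DRare D R ∧
      τ * n < ((Finset.Icc 1 n).filter (fun i => DupDigit α D R n i)).card

/-- `α` is weakly pre-periodic with period `k`. -/
def WeaklyPrePeriodicWith (α : 𝕋) (k : ℕ) : Prop :=
  1 ≤ k ∧ ∃ m : ℕ, 1 ≤ m ∧ ∃ X : Letter, (X = Letter.L ∨ X = Letter.R) ∧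
    ∀ n : ℕ, ia α (m + k * n - 1) = X

/-- `α` is weakly pre-periodic (for some period). -/
def WeaklyPrePeriodic (α : 𝕋) : Prop := ∃ k : ℕ, WeaklyPrePeriodicWith α k

end


open scoped ENNReal Topology

lemma frac_interval_bound (c y a b : ℝ) (hc : 0 < c) (hab : a ≤ b) :
    volume {t : ℝ | t ∈ Icc a b ∧ Int.fract (c * t) ∈ Ioo y (y + 1/2)} ≤
      ENNReal.ofReal ((b - a)/2 + 1/c) := by
  set F : ℤ → Set ℝ := fun p => Ioo ((p + y)/c) ((p + y + 1/2)/c) with hF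
  have hsub : {t : ℝ | t ∈ Icc a b ∧ Int.fract (c * t) ∈ Ioo y (y + 1/2)} ⊆
      ⋃ p ∈ Finset.Icc ⌊c * a⌋ ⌊c * b⌋, F p := by
    rintro t ⟨⟨hta, htb⟩, h1, h2⟩
    have hfr : Int.fract (c * t) = c * t - ⌊c * t⌋ := Int.self_sub_floor (c * t) ▸ rfl
    have hp1 : ⌊c * a⌋ ≤ ⌊c * t⌋ := Int.floor_le_floor (mul_le_mul_of_nonneg_left hta hc.le)
    have hp2 : ⌊c * t⌋ ≤ ⌊c * b⌋ := Int.floor_le_floor (mul_le_mul_of_nonneg_left htb hc.le)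
    have hmem : t ∈ F ⌊c * t⌋ := by
      rw [hfr] at h1 h2
      constructor
      · rw [div_lt_iff₀ hc]; linarith [mul_comm c t]
      · rw [lt_div_iff₀ hc]; linarith [mul_comm c t]
    exact Set.mem_biUnion (Finset.mem_Icc.2 ⟨hp1, hp2⟩) hmem
  refine (measure_mono hsub).trans ?_
  refine (measure_biUnion_finset_le _ _).trans ?_
  have hvol : ∀ p : ℤ, volume (F p) = ENNReal.ofReal (1/(2*c)) := by
    intro p
    rw [hF, Real.volume_Ioo]
    congr 1
    field_simp
    ring
  simp only [hvol, Finset.sum_const, nsmul_eq_mul]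
  have hcard : ((Finset.Icc ⌊c * a⌋ ⌊c * b⌋).card : ℝ) ≤ c * (b - a) + 2 := by
    have hle : ⌊c * a⌋ ≤ ⌊c * b⌋ := Int.floor_le_floor (mul_le_mul_of_nonneg_left hab hc.le)
    have hn : (0:ℤ) ≤ ⌊c * b⌋ + 1 - ⌊c * a⌋ := by omega
    rw [Int.card_Icc]
    have h4 : ((⌊c * b⌋ + 1 - ⌊c * a⌋).toNat : ℝ) = (⌊c * b⌋:ℝ) + 1 - ⌊c * a⌋ := by
      exact_mod_cast congrArg (Int.cast : ℤ → ℝ) (Int.toNat_of_nonneg hn)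
    rw [h4]
    have h1 := Int.floor_le (c * b)
    have h2 := Int.lt_floor_add_one (c * a)
    have h3 : c * (b - a) = c * b - c * a := by ring
    linarith
  calc ((Finset.Icc ⌊c * a⌋ ⌊c * b⌋).card : ℝ≥0∞) * ENNReal.ofReal (1/(2*c))
      = ENNReal.ofReal (((Finset.Icc ⌊c * a⌋ ⌊c * b⌋).card : ℝ) * (1/(2*c))) := by
        rw [ENNReal.ofReal_mul (by positivity), ENNReal.ofReal_natCast]
    _ ≤ ENNReal.ofReal ((b - a)/2 + 1/c) := by
        apply ENNReal.ofReal_le_ofReal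
        have := mul_le_mul_of_nonneg_right hcard (le_of_lt (by positivity : (0:ℝ) < 1/(2*c)))
        refine this.trans (le_of_eq ?_)
        field_simp

lemma null_of_forall_fract (d : ℕ → ℝ) (hd : ∀ n, 0 < d n)
    (htop : Tendsto d atTop atTop) (y : ℝ) :
    volume {t : ℝ | ∀ n, Int.fract (d n * t) ∈ Ioo y (y + 1/2)} = 0 := by
  set E := {t : ℝ | ∀ n, Int.fract (d n * t) ∈ Ioo y (y + 1/2)} with hE
  by_contra h0
  have hae := Besicovitch.ae_tendsto_measure_inter_div (volume : Measure ℝ) E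
  have hres : (volume.restrict E) ≠ 0 := by
    refine fun h => h0 ?_
    rw [← Measure.restrict_apply_univ E, h]
    simp
  have : NeBot (ae (volume.restrict E)) := ae_neBot.2 hres
  obtain ⟨x, hx⟩ := hae.exists
  -- get r > 0 with ratio > 3/4
  have hev : ∀ᶠ r in 𝓝[>] (0:ℝ),
      (3/4 : ℝ≥0∞) < volume (E ∩ Metric.closedBall x r) / volume (Metric.closedBall x r) :=
    hx.eventually (eventually_gt_nhds (by rw [ENNReal.div_lt_iff (by norm_num) (by norm_num)]; norm_num))
  obtain ⟨r, hr34, hrpos⟩ := (hev.and self_mem_nhdsWithin).exists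
  replace hrpos : (0:ℝ) < r := hrpos
  -- pick n with d n ≥ 8 / r
  obtain ⟨n, hn⟩ := (htop.eventually_ge_atTop (8 / r)).exists
  have hdn := hd n
  -- upper bound
  have hsub : E ∩ Metric.closedBall x r ⊆
      {t : ℝ | t ∈ Icc (x - r) (x + r) ∧ Int.fract (d n * t) ∈ Ioo y (y + 1/2)} := by
    rintro t ⟨htE, htB⟩
    exact ⟨by rwa [Real.closedBall_eq_Icc] at htB, htE n⟩
  have hub : volume (E ∩ Metric.closedBall x r) ≤ ENNReal.ofReal (r + r/8) := by
    refine (measure_mono hsub).trans ?_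
    refine (frac_interval_bound (d n) y (x - r) (x + r) hdn (by linarith)).trans ?_
    apply ENNReal.ofReal_le_ofReal
    have h1 : 1 / d n ≤ r / 8 := by
      rw [div_le_div_iff₀ hdn (by norm_num)]
      calc (1:ℝ) * 8 = 8 := by ring
        _ = (8 / r) * r := by field_simp
        _ ≤ d n * r := mul_le_mul_of_nonneg_right hn hrpos.le
        _ = r * d n := mul_comm _ _
    have : (x + r - (x - r))/2 = r := by ring
    linarith [this]
  -- lower bound from density
  have hball : volume (Metric.closedBall x r) = ENNReal.ofReal (2 * r) := Real.volume_closedBall x r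
  have hlb : (3/4 : ℝ≥0∞) * ENNReal.ofReal (2 * r) < volume (E ∩ Metric.closedBall x r) := by
    rw [hball] at hr34
    have hne : ENNReal.ofReal (2 * r) ≠ 0 := by
      simp [ENNReal.ofReal_eq_zero]; linarith
    exact (ENNReal.lt_div_iff_mul_lt (Or.inl hne) (Or.inl ENNReal.ofReal_ne_top)).1 hr34
  have hq : (3/4 : ℝ≥0∞) * ENNReal.ofReal (2 * r) = ENNReal.ofReal (3 * r / 2) := by
    rw [show (3/4 : ℝ≥0∞) = ENNReal.ofReal (3/4) by
      rw [ENNReal.ofReal_div_of_pos (by norm_num)]; norm_num,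
      ← ENNReal.ofReal_mul (by norm_num)]
    congr 1; ring
  rw [hq] at hlb
  have : ENNReal.ofReal (3 * r / 2) < ENNReal.ofReal (r + r/8) := lt_of_lt_of_le hlb hub
  rw [ENNReal.ofReal_lt_ofReal_iff (by linarith)] at this
  linarith

lemma coe_eq_coe_iff' {u v : ℝ} : ((u : 𝕋) = (v : 𝕋)) ↔ ∃ z : ℤ, u - v = z := by
  rw [← sub_eq_zero, ← AddCircle.coe_sub, AddCircle.coe_eq_zero_iff]
  constructor
  · rintro ⟨n, hn⟩; exact ⟨n, by simpa using hn.symm⟩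
  · rintro ⟨z, hz⟩; exact ⟨z, by simp [hz]⟩

lemma rep_coe (t : ℝ) : rep ((t : ℝ) : 𝕋) = Int.fract t := by
  have := AddCircle.coe_equivIco_mk_apply (1:ℝ) t
  simpa [rep] using this

lemma coe_rep (α : 𝕋) : ((rep α : ℝ) : 𝕋) = α :=
  (AddCircle.equivIco 1 0).symm_apply_apply α

lemma dbl_iter_coe (j : ℕ) (t : ℝ) : dbl^[j] ((t : ℝ) : 𝕋) = (((2^j * t : ℝ)) : 𝕋) := by
  induction j with
  | zero => simp
  | succ j ih =>
    rw [Function.iterate_succ_apply', ih]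
    show ((((2:ℝ)^j * t : ℝ)) : 𝕋) + (((2^j * t : ℝ)) : 𝕋) = _
    rw [← AddCircle.coe_add]
    congr 1
    ring

lemma key_chars (α : 𝕋) (j : ℕ) :
    (dbl^[j] α = star1 α ↔ Int.fract ((2:ℝ)^j * rep α - rep α / 2) = 0) ∧
    (dbl^[j] α = star2 α ↔ Int.fract ((2:ℝ)^j * rep α - rep α / 2) = 1/2) ∧
    (dbl^[j] α ∈ openArcL α ↔ Int.fract ((2:ℝ)^j * rep α - rep α / 2) ∈ Set.Ioo 0 (1/2:ℝ)) := by
  have hiter : dbl^[j] α = (((2:ℝ)^j * rep α : ℝ) : 𝕋) := by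
    conv_lhs => rw [← coe_rep α]
    exact dbl_iter_coe j (rep α)
  refine ⟨?_, ?_, ?_⟩
  · rw [hiter, star1, coe_eq_coe_iff']
    constructor
    · rintro ⟨z, hz⟩
      rw [Int.fract_eq_iff]
      exact ⟨le_refl _, by norm_num, z, by linarith⟩
    · intro h
      rw [Int.fract_eq_iff] at h
      obtain ⟨-, -, z, hz⟩ := h
      exact ⟨z, by linarith⟩
  · rw [hiter, star2, coe_eq_coe_iff']
    constructor
    · rintro ⟨z, hz⟩
      rw [Int.fract_eq_iff]
      exact ⟨by norm_num, by norm_num, z, by linarith⟩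
    · intro h
      rw [Int.fract_eq_iff] at h
      obtain ⟨-, -, z, hz⟩ := h
      exact ⟨z, by linarith⟩
  · rw [hiter, openArcL]
    constructor
    · rintro ⟨t, ht, heq⟩
      obtain ⟨z, hz⟩ := coe_eq_coe_iff'.1 heq
      have hft : Int.fract ((2:ℝ)^j * rep α - rep α / 2) = t := by
        rw [Int.fract_eq_iff]
        refine ⟨ht.1.le, by linarith [ht.2], ⟨-z, ?_⟩⟩
        push_cast
        linarith
      rw [hft]; exact ht
    · intro h
      refine ⟨Int.fract ((2:ℝ)^j * rep α - rep α / 2), h, ?_⟩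
      rw [coe_eq_coe_iff']
      refine ⟨-⌊(2:ℝ)^j * rep α - rep α / 2⌋, ?_⟩
      have h2 := Int.self_sub_floor ((2:ℝ)^j * rep α - rep α / 2)
      push_cast
      linarith

lemma ia_eq_L_iff (α : 𝕋) (j : ℕ) :
    ia α j = Letter.L ↔ Int.fract (((2:ℝ)^(j+1) - 1) * (rep α / 2)) ∈ Set.Ioo 0 (1/2:ℝ) := by
  have hq : (((2:ℝ)^(j+1) - 1) * (rep α / 2)) = (2:ℝ)^j * rep α - rep α / 2 := by
    rw [pow_succ]; ring
  rw [hq]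
  obtain ⟨h1, h2, h3⟩ := key_chars α j
  rw [ia, itin]
  constructor
  · intro h
    by_cases hs : dbl^[j] α = star1 α ∨ dbl^[j] α = star2 α
    · rw [if_pos hs] at h; exact Letter.noConfusion h
    · rw [if_neg hs] at h
      by_cases ho : dbl^[j] α ∈ openArcL α
      · exact h3.1 ho
      · rw [if_neg ho] at h; exact Letter.noConfusion h
  · intro h
    rw [if_neg, if_pos (h3.2 h)]
    rintro (hs | hs)
    · exact absurd (h1.1 hs) (ne_of_gt h.1)
    · exact absurd (h2.1 hs) (ne_of_lt h.2)

lemma ia_eq_R_iff (α : 𝕋) (j : ℕ) :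
    ia α j = Letter.R ↔ Int.fract (((2:ℝ)^(j+1) - 1) * (rep α / 2)) ∈ Set.Ioo (1/2:ℝ) 1 := by
  have hq : (((2:ℝ)^(j+1) - 1) * (rep α / 2)) = (2:ℝ)^j * rep α - rep α / 2 := by
    rw [pow_succ]; ring
  rw [hq]
  obtain ⟨h1, h2, h3⟩ := key_chars α j
  rw [ia, itin]
  have hb0 : (0:ℝ) ≤ Int.fract ((2:ℝ)^j * rep α - rep α / 2) := Int.fract_nonneg _
  have hb1 : Int.fract ((2:ℝ)^j * rep α - rep α / 2) < 1 := Int.fract_lt_one _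
  constructor
  · intro h
    by_cases hs : dbl^[j] α = star1 α ∨ dbl^[j] α = star2 α
    · rw [if_pos hs] at h; exact Letter.noConfusion h
    · rw [if_neg hs] at h
      by_cases ho : dbl^[j] α ∈ openArcL α
      · rw [if_pos ho] at h; exact Letter.noConfusion h
      · have hne0 : Int.fract ((2:ℝ)^j * rep α - rep α / 2) ≠ 0 := fun h0 => hs (Or.inl (h1.2 h0))
        have hne2 : Int.fract ((2:ℝ)^j * rep α - rep α / 2) ≠ 1/2 := fun h0 => hs (Or.inr (h2.2 h0))
        have hnI : Int.fract ((2:ℝ)^j * rep α - rep α / 2) ∉ Set.Ioo 0 (1/2:ℝ) := fun hI => ho (h3.2 hI)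
        simp only [Set.mem_Ioo, not_and, not_lt] at hnI
        refine ⟨?_, hb1⟩
        rcases lt_or_eq_of_le hb0 with h0 | h0
        · have := hnI h0
          rcases lt_or_eq_of_le this with h' | h'
          · exact h'
          · exact absurd h'.symm hne2
        · exact absurd h0.symm hne0
  · intro h
    rw [if_neg, if_neg]
    · intro ho
      exact absurd (h3.1 ho).2 (not_lt.2 h.1.le)
    · rintro (hs | hs)
      · refine absurd (h1.1 hs) ?_
        intro h0
        rw [h0] at h
        exact absurd h.1 (by norm_num)
      · exact absurd (h2.1 hs) (ne_of_gt h.1)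

lemma measurable_rep : Measurable rep :=
  measurable_subtype_coe.comp (AddCircle.measurableEquivIco 1 0).measurable

lemma null_circle_set (d : ℕ → ℝ) (hd : ∀ n, 0 < d n)
    (htop : Tendsto d atTop atTop) (y : ℝ) :
    volume {α : 𝕋 | ∀ n, Int.fract (d n * rep α) ∈ Ioo y (y + 1/2)} = 0 := by
  set S := {α : 𝕋 | ∀ n, Int.fract (d n * rep α) ∈ Ioo y (y + 1/2)} with hS
  have hSm : MeasurableSet S := by
    have : S = ⋂ n, (fun α => Int.fract (d n * rep α)) ⁻¹' Ioo y (y + 1/2) := by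
      ext α; simp [hS]
    rw [this]
    exact MeasurableSet.iInter fun n =>
      ((measurable_const.mul measurable_rep).fract) measurableSet_Ioo
  have hpres := AddCircle.measurePreserving_mk 1 0
  have h1 : volume S = (volume.restrict (Ioc (0:ℝ) (0 + 1))) ((fun t : ℝ => (t : 𝕋)) ⁻¹' S) :=
    (hpres.measure_preimage hSm.nullMeasurableSet).symm
  rw [h1, Measure.restrict_apply (hSm.preimage (AddCircle.measurable_mk'))]
  have hsub : (fun t : ℝ => (t : 𝕋)) ⁻¹' S ∩ Ioc (0:ℝ) (0 + 1) ⊆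
      {t : ℝ | ∀ n, Int.fract (d n * t) ∈ Ioo y (y + 1/2)} ∪ {(1:ℝ)} := by
    rintro t ⟨htS, ht0, ht1⟩
    rcases eq_or_lt_of_le ht1 with h | h
    · right; simpa using h
    · left
      intro n
      have hrep : rep ((t : ℝ) : 𝕋) = t := by
        rw [show rep ((t:ℝ):𝕋) = Int.fract t from by
          simpa [rep] using AddCircle.coe_equivIco_mk_apply (1:ℝ) t]
        exact Int.fract_eq_self.2 ⟨ht0.le, by linarith⟩
      have := htS n
      rwa [hrep] at this
  refine le_antisymm ((measure_mono hsub).trans ?_) zero_le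
  refine (measure_union_le _ _).trans ?_
  rw [null_of_forall_fract d hd htop y, Real.volume_singleton]
  simp


/-- the set of weakly pre-periodic angles has Haar (Lebesgue) measure zero. -/
theorem stmt_3 : volume {α : 𝕋 | WeaklyPrePeriodic α} = 0 := by
  set A : ℕ → ℕ → Bool → Set 𝕋 := fun k m b =>
    {α : 𝕋 | ∀ n, Int.fract ((((2:ℝ)^((m+1) + (k+1)*n) - 1)/2) * rep α) ∈
      Ioo (if b then (0:ℝ) else 1/2) ((if b then (0:ℝ) else 1/2) + 1/2)} with hA
  have hsub : {α : 𝕋 | WeaklyPrePeriodic α} ⊆ ⋃ (k : ℕ) (m : ℕ) (b : Bool), A k m b := by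
    rintro α ⟨k, hk1, m, hm1, X, hX, hall⟩
    obtain ⟨k', rfl⟩ : ∃ k', k = k' + 1 := ⟨k - 1, by omega⟩
    obtain ⟨m', rfl⟩ : ∃ m', m = m' + 1 := ⟨m - 1, by omega⟩
    refine mem_iUnion.2 ⟨k', mem_iUnion.2 ⟨m', ?_⟩⟩
    have hj : ∀ n : ℕ, (m' + 1 + (k' + 1) * n - 1) + 1 = (m' + 1) + (k' + 1) * n := by
      intro n; omega
    have harg : ∀ n : ℕ, (((2:ℝ)^((m' + 1 + (k' + 1) * n - 1) + 1) - 1)) * (rep α / 2)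
        = (((2:ℝ)^((m'+1) + (k'+1)*n) - 1)/2) * rep α := by
      intro n; rw [hj n]; ring
    rcases hX with hXL | hXR
    · refine mem_iUnion.2 ⟨true, fun n => ?_⟩
      have := (ia_eq_L_iff α (m' + 1 + (k' + 1) * n - 1)).1 (by rw [hall n, hXL])
      rw [harg n] at this
      simp only [if_true]
      simpa using this
    · refine mem_iUnion.2 ⟨false, fun n => ?_⟩
      have := (ia_eq_R_iff α (m' + 1 + (k' + 1) * n - 1)).1 (by rw [hall n, hXR])
      rw [harg n] at this
      simp only [if_false, Bool.false_eq_true]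
      convert this using 2
      norm_num
  refine le_antisymm ((measure_mono hsub).trans ?_) zero_le
  rw [measure_iUnion_null fun k => measure_iUnion_null fun m => measure_iUnion_null fun b => ?_]
  set d : ℕ → ℝ := fun n => (((2:ℝ)^((m+1) + (k+1)*n) - 1)/2) with hd
  have hpos : ∀ n, 0 < d n := by
    intro n
    have h2 : (2:ℝ)^1 ≤ (2:ℝ)^((m+1) + (k+1)*n) := by
      apply pow_le_pow_right₀ one_le_two
      omega
    simp only [hd]
    norm_num at h2 ⊢
    linarith
  have htop : Tendsto d atTop atTop := by
    apply tendsto_atTop_mono _ tendsto_natCast_atTop_atTop (f := fun n : ℕ => (n : ℝ))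
    intro n
    have hcast : ((2:ℕ)^n : ℝ) = (2:ℝ)^n := by push_cast; ring
    have h1 : (n:ℝ) + 1 ≤ (2:ℝ)^n := by
      rw [← hcast]
      exact_mod_cast Nat.succ_le_of_lt (Nat.lt_two_pow_self (n := n))
    have h2 : (2:ℝ)^(n+1) ≤ (2:ℝ)^((m+1) + (k+1)*n) := by
      apply pow_le_pow_right₀ one_le_two
      have : n + 1 ≤ m + 1 + n := by omega
      refine this.trans ?_
      have : n ≤ (k+1) * n := Nat.le_mul_of_pos_left n (by omega)
      omega
    have h3 : (2:ℝ)^(n+1) = 2 * (2:ℝ)^n := by rw [pow_succ]; ring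
    simp only [hd]
    nlinarith
  exact null_circle_set d hpos htop _
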